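/- arXiv:2210.10268 — 2 statements merged into one kernel-verified Lean document; each statement's English description precedes it below -/
import Mathlib

section
/- In the neural setup with n ≥ 1, assume E[X_j²] < ∞ for every j ∈ {1, …, d}, and let X*' be an independent copy of the random vector X* (for instance, built from independent copies Θ'^{(1)}, …, Θ'^{(n)} and X' of the matrices and of X, all independent of the original ones). Then E[⟨X*, X*'⟩²] ≤ d · ( max_{1≤j≤d} E[X_j²] )², where ⟨·,·⟩ is the Euclidean inner product on ℝ^d. -/
/-!
STATEMENT 16: In the neural setup with `n ≥ 1`, if `E[X_j²] < ∞` for every `j` and `X*'` is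
an independent copy of the random vector `X* = Θ^{(1)} ⋯ Θ^{(n)} X`, then
`E[⟨X*, X*'⟩²] ≤ d · (max_{1≤j≤d} E[X_j²])²`.
-/

open MeasureTheory ProbabilityTheory
open scoped NNReal

noncomputable section

variable {Ω : Type*} [MeasurableSpace Ω]

/-- `X* = Θ^{(1)} ⋯ Θ^{(n)} X` as a random vector in `ℝ^d`. -/
def neuralVec (d n : ℕ) (Θ : Fin n → Ω → Matrix (Fin d) (Fin d) ℝ)
    (X : Fin d → Ω → ℝ) (ω : Ω) : Fin d → ℝ :=
  ((List.ofFn fun i => Θ i ω).prod).mulVec fun j => X j ω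


open Real Filter
open scoped ENNReal Real

set_option linter.unusedSectionVars false
set_option maxHeartbeats 1000000


lemma aux_odd {b : ℝ} : ∫ x : ℝ, x * rexp (-b * x ^ 2) = 0 := by
  have h := integral_neg_eq_self (fun x : ℝ => x * rexp (-b * x ^ 2)) volume
  simp only [neg_sq, neg_mul, ← neg_mul_eq_neg_mul] at h
  rw [integral_neg] at h
  simp only [neg_mul] at h ⊢
  linarith

lemma aux_int_sq {b : ℝ} (hb : 0 < b) :
    Integrable (fun x : ℝ => x ^ 2 * rexp (-b * x ^ 2)) := by
  have := integrable_rpow_mul_exp_neg_mul_sq hb (s := 2) (by norm_num)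
  refine this.congr (Eventually.of_forall fun x => ?_)
  norm_num

lemma aux_tendsto {b : ℝ} (hb : 0 < b) :
    Tendsto (fun x : ℝ => x * rexp (-b * x ^ 2)) (cocompact ℝ) (nhds 0) := by
  have h := tendsto_rpow_abs_mul_exp_neg_mul_sq_cocompact hb 1
  simp only [Real.rpow_one] at h
  rw [tendsto_zero_iff_norm_tendsto_zero]
  refine h.congr fun x => ?_
  rw [norm_mul, Real.norm_eq_abs, Real.norm_eq_abs, abs_of_nonneg (exp_nonneg _)]

lemma aux_sq_integral {b : ℝ} (hb : 0 < b) :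
    ∫ x : ℝ, x ^ 2 * rexp (-b * x ^ 2) = (2 * b)⁻¹ * Real.sqrt (π / b) := by
  have hb2 : (2 * b) ≠ 0 := by positivity
  set F := fun x : ℝ => -(2 * b)⁻¹ * (x * rexp (-b * x ^ 2)) with hF
  have hderiv : ∀ x : ℝ, HasDerivAt F
      (x ^ 2 * rexp (-b * x ^ 2) - (2 * b)⁻¹ * rexp (-b * x ^ 2)) x := by
    intro x
    have h1 : HasDerivAt (fun x : ℝ => -b * x ^ 2) (-b * (2 * x)) x := by
      simpa using (hasDerivAt_pow 2 x).const_mul (-b)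
    have h2 : HasDerivAt (fun x : ℝ => rexp (-b * x ^ 2))
        (rexp (-b * x ^ 2) * (-b * (2 * x))) x := h1.exp
    have h3 : HasDerivAt (fun x : ℝ => x * rexp (-b * x ^ 2))
        (1 * rexp (-b * x ^ 2) + x * (rexp (-b * x ^ 2) * (-b * (2 * x)))) x :=
      (hasDerivAt_id x).mul h2
    have h4 := h3.const_mul (-(2 * b)⁻¹)
    refine h4.congr_deriv ?_
    field_simp
    ring
  have hint : Integrable (fun x : ℝ =>
      x ^ 2 * rexp (-b * x ^ 2) - (2 * b)⁻¹ * rexp (-b * x ^ 2)) :=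
    (aux_int_sq hb).sub ((integrable_exp_neg_mul_sq hb).const_mul _)
  have hmono : atTop ≤ cocompact ℝ := by
    rw [cocompact_eq_atBot_atTop]; exact le_sup_right
  have hmono' : atBot ≤ cocompact ℝ := by
    rw [cocompact_eq_atBot_atTop]; exact le_sup_left
  have hco := (aux_tendsto hb).const_mul (-(2 * b)⁻¹)
  have htop : Tendsto F atTop (nhds 0) := by simpa [hF] using hco.mono_left hmono
  have hbot : Tendsto F atBot (nhds 0) := by simpa [hF] using hco.mono_left hmono'
  have h0 := integral_of_hasDerivAt_of_tendsto hderiv hint hbot htop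
  rw [integral_sub (aux_int_sq hb) ((integrable_exp_neg_mul_sq hb).const_mul _)] at h0
  rw [integral_const_mul, integral_gaussian] at h0
  linarith


lemma gaussian_integral_eq {v : ℝ≥0} (hv : v ≠ 0) (g : ℝ → ℝ) :
    ∫ x, g x ∂(gaussianReal 0 v) = ∫ x, gaussianPDFReal 0 v x * g x := by
  rw [gaussianReal_of_var_ne_zero 0 hv]
  have h1 : (gaussianPDF 0 v) =
      fun x => (Real.toNNReal (gaussianPDFReal 0 v x) : ℝ≥0∞) := rfl
  have hmeas : Measurable fun x => (gaussianPDFReal 0 v x).toNNReal :=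
    measurable_real_toNNReal.comp (measurable_gaussianPDFReal 0 v)
  rw [h1, integral_withDensity_eq_integral_smul hmeas g]
  refine integral_congr_ae (Eventually.of_forall fun x => ?_)
  simp only [Function.comp, NNReal.smul_def, smul_eq_mul,
    Real.coe_toNNReal _ (gaussianPDFReal_nonneg 0 v x)]

lemma gaussian_pdf_shape {v : ℝ≥0} (hv : v ≠ 0) (x : ℝ) :
    gaussianPDFReal 0 v x = (Real.sqrt (2 * π * v))⁻¹ * rexp (-(2 * (v:ℝ))⁻¹ * x ^ 2) := by
  have hvpos : (0:ℝ) < v := by positivity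
  simp only [gaussianPDFReal, sub_zero]
  congr 1
  rw [neg_div]
  congr 1
  field_simp

lemma gaussian_mean {v : ℝ≥0} (hv : v ≠ 0) :
    ∫ x, x ∂(gaussianReal 0 v) = 0 := by
  rw [gaussian_integral_eq hv]
  have : (fun x : ℝ => gaussianPDFReal 0 v x * x)
      = fun x => (Real.sqrt (2 * π * v))⁻¹ * (x * rexp (-(2 * (v:ℝ))⁻¹ * x ^ 2)) := by
    funext x; rw [gaussian_pdf_shape hv]; ring
  rw [this, integral_const_mul, aux_odd, mul_zero]

lemma gaussian_sq {v : ℝ≥0} (hv : v ≠ 0) :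
    ∫ x, x ^ 2 ∂(gaussianReal 0 v) = (v : ℝ) := by
  have hvpos : (0:ℝ) < v := by
    have := hv; positivity
  have hb : (0:ℝ) < (2 * (v:ℝ))⁻¹ := by positivity
  rw [gaussian_integral_eq hv]
  have : (fun x : ℝ => gaussianPDFReal 0 v x * x ^ 2)
      = fun x => (Real.sqrt (2 * π * v))⁻¹ * (x ^ 2 * rexp (-(2 * (v:ℝ))⁻¹ * x ^ 2)) := by
    funext x; rw [gaussian_pdf_shape hv]; ring
  rw [this, integral_const_mul, aux_sq_integral hb]
  have h2 : (2 * ((2 * (v:ℝ))⁻¹))⁻¹ = (v:ℝ) := by field_simp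
  have h3 : π / (2 * (v:ℝ))⁻¹ = 2 * π * v := by field_simp
  rw [h2, h3]
  have hs : Real.sqrt (2 * π * v) ≠ 0 := by
    refine Real.sqrt_ne_zero'.mpr ?_
    positivity
  field_simp

lemma gaussian_integrable_sq {v : ℝ≥0} (hv : v ≠ 0) :
    Integrable (fun x : ℝ => x ^ 2) (gaussianReal 0 v) := by
  have hvpos : (0:ℝ) < v := by positivity
  have hb : (0:ℝ) < (2 * (v:ℝ))⁻¹ := by positivity
  rw [gaussianReal_of_var_ne_zero 0 hv]
  have h1 : (gaussianPDF 0 v) =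
      fun x => (Real.toNNReal (gaussianPDFReal 0 v x) : ℝ≥0∞) := rfl
  have hmeas : Measurable fun x => (gaussianPDFReal 0 v x).toNNReal :=
    measurable_real_toNNReal.comp (measurable_gaussianPDFReal 0 v)
  rw [h1, integrable_withDensity_iff_integrable_smul hmeas]
  have : (fun x : ℝ => (Real.toNNReal (gaussianPDFReal 0 v x)) • (x ^ 2))
      = fun x => (Real.sqrt (2 * π * v))⁻¹ * (x ^ 2 * rexp (-(2 * (v:ℝ))⁻¹ * x ^ 2)) := by
    funext x
    rw [NNReal.smul_def, smul_eq_mul, Real.coe_toNNReal _ (gaussianPDFReal_nonneg 0 v x),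
      gaussian_pdf_shape hv]
    ring
  rw [this]
  exact (aux_int_sq hb).const_mul _



lemma int_mul_of_L2 {μ : Measure Ω} {f g : Ω → ℝ}
    (hf : MemLp f 2 μ) (hg : MemLp g 2 μ) :
    Integrable (fun ω => f ω * g ω) μ := by
  have h : Integrable (fun ω => f ω ^ 2 + g ω ^ 2) μ :=
    hf.integrable_sq.add hg.integrable_sq
  refine h.mono' (hf.aestronglyMeasurable.mul hg.aestronglyMeasurable)
    (Filter.Eventually.of_forall fun ω => ?_)
  have h1 : ‖f ω * g ω‖ = |f ω * g ω| := rfl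
  rw [h1, abs_mul]
  nlinarith [sq_nonneg (|f ω| - |g ω|), abs_nonneg (f ω), abs_nonneg (g ω),
    sq_abs (f ω), sq_abs (g ω)]

lemma layer_moment (μ : Measure Ω) [IsProbabilityMeasure μ] {d : ℕ}
    (T : Ω → Matrix (Fin d) (Fin d) ℝ) (Y : Ω → Fin d → ℝ)
    (hTL2 : ∀ a b, MemLp (fun ω => T ω a b) 2 μ)
    (hYint : ∀ a b, Integrable (fun ω => Y ω a * Y ω b) μ)
    (hTpair : ∀ p q : Fin d × Fin d, p ≠ q →
        IndepFun (fun ω => T ω p.1 p.2) (fun ω => T ω q.1 q.2) μ)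
    (hTY : ∀ j a k b : Fin d, IndepFun (fun ω => T ω j a * T ω k b)
        (fun ω => Y ω a * Y ω b) μ)
    (hmean : ∀ a b, ∫ ω, T ω a b ∂μ = 0)
    (hvar : ∀ a b, ∫ ω, (T ω a b) ^ 2 ∂μ = (d:ℝ)⁻¹) :
    (∀ j k, Integrable (fun ω => (T ω).mulVec (Y ω) j * (T ω).mulVec (Y ω) k) μ) ∧
    (∀ j k, ∫ ω, (T ω).mulVec (Y ω) j * (T ω).mulVec (Y ω) k ∂μ
      = if j = k then (d:ℝ)⁻¹ * ∑ a, ∫ ω, Y ω a * Y ω a ∂μ else 0) := by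
  have hTT : ∀ j a k b : Fin d, Integrable (fun ω => T ω j a * T ω k b) μ :=
    fun j a k b => int_mul_of_L2 (hTL2 j a) (hTL2 k b)
  have hterm : ∀ j a k b : Fin d,
      Integrable (fun ω => (T ω j a * T ω k b) * (Y ω a * Y ω b)) μ :=
    fun j a k b => (hTY j a k b).integrable_mul (hTT j a k b) (hYint a b)
  have hexpand : ∀ (j k : Fin d) (ω : Ω),
      (T ω).mulVec (Y ω) j * (T ω).mulVec (Y ω) k
        = ∑ a, ∑ b, (T ω j a * T ω k b) * (Y ω a * Y ω b) := by
    intro j k ω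
    show (∑ a, T ω j a * Y ω a) * (∑ b, T ω k b * Y ω b) = _
    rw [Finset.sum_mul_sum]
    exact Finset.sum_congr rfl fun a _ => Finset.sum_congr rfl fun b _ => by ring
  have hint : ∀ j k : Fin d,
      Integrable (fun ω => (T ω).mulVec (Y ω) j * (T ω).mulVec (Y ω) k) μ := by
    intro j k
    have : (fun ω => (T ω).mulVec (Y ω) j * (T ω).mulVec (Y ω) k)
        = fun ω => ∑ a, ∑ b, (T ω j a * T ω k b) * (Y ω a * Y ω b) := by
      funext ω; exact hexpand j k ω
    rw [this]
    exact integrable_finset_sum _ fun a _ => integrable_finset_sum _ fun b _ => hterm j a k b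
  refine ⟨hint, fun j k => ?_⟩
  have hTTval : ∀ j a k b : Fin d, ∫ ω, T ω j a * T ω k b ∂μ
      = if j = k ∧ a = b then (d:ℝ)⁻¹ else 0 := by
    intro j a k b
    by_cases h : ((j, a) : Fin d × Fin d) = (k, b)
    · have h1 : j = k := congrArg Prod.fst h
      have h2 : a = b := congrArg Prod.snd h
      subst h1; subst h2
      rw [if_pos ⟨rfl, rfl⟩, ← hvar j a]
      exact integral_congr_ae (Filter.Eventually.of_forall fun ω => by simp [pow_two])
    · have hne : ¬(j = k ∧ a = b) := by
        intro ⟨h1, h2⟩; exact h (by rw [h1, h2])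
      have h3 : ∫ ω, T ω j a * T ω k b ∂μ
          = (∫ ω, T ω j a ∂μ) * ∫ ω, T ω k b ∂μ :=
        (hTpair (j, a) (k, b) h).integral_mul_eq_mul_integral
          ((hTL2 j a).integrable one_le_two).aestronglyMeasurable ((hTL2 k b).integrable one_le_two).aestronglyMeasurable
      rw [if_neg hne, h3, hmean, zero_mul]
  calc ∫ ω, (T ω).mulVec (Y ω) j * (T ω).mulVec (Y ω) k ∂μ
      = ∫ ω, ∑ a, ∑ b, (T ω j a * T ω k b) * (Y ω a * Y ω b) ∂μ :=
        integral_congr_ae (Filter.Eventually.of_forall fun ω => hexpand j k ω)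
    _ = ∑ a, ∑ b, ∫ ω, (T ω j a * T ω k b) * (Y ω a * Y ω b) ∂μ := by
        rw [integral_finset_sum _ fun a _ =>
          integrable_finset_sum _ fun b _ => hterm j a k b]
        exact Finset.sum_congr rfl fun a _ =>
          integral_finset_sum _ fun b _ => hterm j a k b
    _ = ∑ a, ∑ b, (if j = k ∧ a = b then (d:ℝ)⁻¹ else 0) * ∫ ω, Y ω a * Y ω b ∂μ := by
        refine Finset.sum_congr rfl fun a _ => Finset.sum_congr rfl fun b _ => ?_
        have h4 : ∫ ω, (T ω j a * T ω k b) * (Y ω a * Y ω b) ∂μ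
            = (∫ ω, T ω j a * T ω k b ∂μ) * ∫ ω, Y ω a * Y ω b ∂μ :=
          (hTY j a k b).integral_mul_eq_mul_integral (hTT j a k b).aestronglyMeasurable (hYint a b).aestronglyMeasurable
        rw [h4, hTTval]
    _ = if j = k then (d:ℝ)⁻¹ * ∑ a, ∫ ω, Y ω a * Y ω a ∂μ else 0 := by
        by_cases hjk : j = k
        · subst hjk
          simp only [true_and, if_pos rfl, Finset.mul_sum]
          refine Finset.sum_congr rfl fun a _ => ?_
          rw [Finset.sum_eq_single a]
          · rw [if_pos rfl]
          · intro b _ hb; rw [if_neg (fun h => hb h.symm), zero_mul]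
          · intro h; exact absurd (Finset.mem_univ a) h
        · simp only [hjk, false_and, if_neg hjk, if_false, zero_mul,
            Finset.sum_const_zero]



lemma neuralVec_zero (d : ℕ) (Θ : Fin 0 → Ω → Matrix (Fin d) (Fin d) ℝ)
    (X : Fin d → Ω → ℝ) (ω : Ω) : neuralVec d 0 Θ X ω = fun j => X j ω := by
  unfold neuralVec
  simp [Matrix.one_mulVec]

lemma neuralVec_succ (d n : ℕ) (Θ : Fin (n + 1) → Ω → Matrix (Fin d) (Fin d) ℝ)
    (X : Fin d → Ω → ℝ) (ω : Ω) :
    neuralVec d (n + 1) Θ X ω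
      = (Θ 0 ω).mulVec (neuralVec d n (fun i => Θ i.succ) X ω) := by
  unfold neuralVec
  rw [List.ofFn_succ, List.prod_cons, Matrix.mulVec_mulVec]

lemma measurable_mulVecProd {α : Type*} [MeasurableSpace α] {d : ℕ} :
    ∀ (n : ℕ) (M : Fin n → α → Matrix (Fin d) (Fin d) ℝ) (v : Fin d → α → ℝ),
    (∀ i a b, Measurable fun x => M i x a b) → (∀ a, Measurable (v a)) →
    ∀ j, Measurable fun x => ((List.ofFn fun i => M i x).prod).mulVec (fun a => v a x) j := by
  intro n
  induction n with
  | zero =>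
    intro M v hM hv j
    have : (fun x => ((List.ofFn fun i => M i x).prod).mulVec (fun a => v a x) j) = v j := by
      funext x; simp [Matrix.one_mulVec]
    rw [this]; exact hv j
  | succ n ih =>
    intro M v hM hv j
    have heq : (fun x => ((List.ofFn fun i => M i x).prod).mulVec (fun a => v a x) j)
        = fun x => ∑ a, M 0 x j a *
            ((List.ofFn fun i => M i.succ x).prod).mulVec (fun a => v a x) a := by
      funext x
      rw [List.ofFn_succ, List.prod_cons, ← Matrix.mulVec_mulVec]
      rfl
    rw [heq]
    exact Finset.measurable_sum _ fun a _ =>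
      (hM 0 j a).mul (ih (fun i => M i.succ) v (fun i a b => hM i.succ a b) hv a)

lemma indepFun_pair_right {β γ δ : Type*} [MeasurableSpace β] [MeasurableSpace γ]
    [MeasurableSpace δ] {μ : Measure Ω} [IsProbabilityMeasure μ]
    {f : Ω → β} {g : Ω → γ} {h : Ω → δ}
    (hf : Measurable f) (hg : Measurable g) (hh : Measurable h)
    (hfg : IndepFun f g μ) (hgh : IndepFun g h μ)
    (hfgh : IndepFun (fun ω => (f ω, g ω)) h μ) :
    IndepFun f (fun ω => (g ω, h ω)) μ := by
  haveI := Measure.isProbabilityMeasure_map hf.aemeasurable (μ := μ)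
  haveI := Measure.isProbabilityMeasure_map hg.aemeasurable (μ := μ)
  haveI := Measure.isProbabilityMeasure_map hh.aemeasurable (μ := μ)
  rw [indepFun_iff_map_prod_eq_prod_map_map hf.aemeasurable (hg.prodMk hh).aemeasurable]
  have h1 : (fun ω => (f ω, (g ω, h ω)))
      = (MeasurableEquiv.prodAssoc : (β × γ) × δ ≃ᵐ β × γ × δ)
          ∘ (fun ω => ((f ω, g ω), h ω)) := rfl
  rw [h1, ← Measure.map_map MeasurableEquiv.prodAssoc.measurable
      ((hf.prodMk hg).prodMk hh),
    (indepFun_iff_map_prod_eq_prod_map_map (hf.prodMk hg).aemeasurable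
      hh.aemeasurable).mp hfgh,
    (indepFun_iff_map_prod_eq_prod_map_map hf.aemeasurable hg.aemeasurable).mp hfg,
    Measure.prodAssoc_prod,
    ← (indepFun_iff_map_prod_eq_prod_map_map hg.aemeasurable hh.aemeasurable).mp hgh]
lemma neural_moments (μ : Measure Ω) [IsProbabilityMeasure μ] {d : ℕ} (hd : 0 < d) :
    ∀ (n : ℕ) (Θ : Fin n → Ω → Matrix (Fin d) (Fin d) ℝ) (X : Fin d → Ω → ℝ),
    (∀ i a b, Measurable fun ω => Θ i ω a b) →
    (∀ j, Measurable (X j)) →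
    (∀ p q : Fin n × Fin d × Fin d, p ≠ q →
        IndepFun (fun ω => Θ p.1 ω p.2.1 p.2.2) (fun ω => Θ q.1 ω q.2.1 q.2.2) μ) →
    (∀ i a b, MemLp (fun ω => Θ i ω a b) 2 μ) →
    (∀ i a b, ∫ ω, Θ i ω a b ∂μ = 0) →
    (∀ i a b, ∫ ω, (Θ i ω a b) ^ 2 ∂μ = (d:ℝ)⁻¹) →
    (∀ i : Fin n, IndepFun (fun ω (q : Fin d × Fin d) => Θ i ω q.1 q.2)
        (fun ω => ((fun q : Fin n × Fin d × Fin d =>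
            if i < q.1 then Θ q.1 ω q.2.1 q.2.2 else 0), fun j => X j ω)) μ) →
    (∀ a b, Integrable (fun ω => X a ω * X b ω) μ) →
    (∀ j k, Integrable (fun ω => neuralVec d n Θ X ω j * neuralVec d n Θ X ω k) μ) ∧
    (∀ j k, ∫ ω, neuralVec d n Θ X ω j * neuralVec d n Θ X ω k ∂μ
      = if n = 0 then ∫ ω, X j ω * X k ω ∂μ
        else if j = k then (d:ℝ)⁻¹ * ∑ a, ∫ ω, X a ω * X a ω ∂μ else 0) := by
  intro n
  induction n with
  | zero =>
    intro Θ X hmeas hXmeas hpair hL2 hmean hvar hsep hXint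
    constructor
    · intro j k
      simp only [neuralVec_zero]
      exact hXint j k
    · intro j k
      simp [neuralVec_zero]
  | succ n ih =>
    intro Θ X hmeas hXmeas hpair hL2 hmean hvar hsep hXint
    set Θ' : Fin n → Ω → Matrix (Fin d) (Fin d) ℝ := fun i => Θ i.succ with hΘ'
    -- independence for the tail
    have hpair' : ∀ p q : Fin n × Fin d × Fin d, p ≠ q →
        IndepFun (fun ω => Θ' p.1 ω p.2.1 p.2.2) (fun ω => Θ' q.1 ω q.2.1 q.2.2) μ := by
      intro p q hpq
      refine hpair (p.1.succ, p.2) (q.1.succ, q.2) ?_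
      intro hc
      apply hpq
      have h1 : (p.1.succ, p.2).1 = (q.1.succ, q.2).1 := congrArg Prod.fst hc
      have h2 : (p.1.succ, p.2).2 = (q.1.succ, q.2).2 := congrArg Prod.snd hc
      exact Prod.ext_iff.mpr ⟨Fin.succ_injective n h1, h2⟩
    have hsep' : ∀ i : Fin n, IndepFun (fun ω (q : Fin d × Fin d) => Θ' i ω q.1 q.2)
        (fun ω => ((fun q : Fin n × Fin d × Fin d =>
            if i < q.1 then Θ' q.1 ω q.2.1 q.2.2 else 0), fun j => X j ω)) μ := by
      intro i
      have h0 := hsep i.succ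
      set φ : ((Fin (n+1) × Fin d × Fin d → ℝ) × (Fin d → ℝ))
          → ((Fin n × Fin d × Fin d → ℝ) × (Fin d → ℝ)) :=
        fun z => (fun q => if i < q.1 then z.1 (q.1.succ, q.2) else 0, z.2) with hφdef
      have hφ : Measurable φ := by
        refine Measurable.prod ?_ measurable_snd
      /- first component -/
        refine measurable_pi_lambda _ fun q => ?_
        by_cases hq : i < q.1
        · simp only [hφdef, hq, if_true]
          exact (measurable_pi_apply _).comp measurable_fst
        · simp only [hφdef, hq, if_false]
          exact measurable_const
      have hco : (fun ω => ((fun q : Fin n × Fin d × Fin d =>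
            if i < q.1 then Θ' q.1 ω q.2.1 q.2.2 else 0), fun j => X j ω))
          = φ ∘ (fun ω => ((fun q : Fin (n+1) × Fin d × Fin d =>
            if i.succ < q.1 then Θ q.1 ω q.2.1 q.2.2 else 0), fun j => X j ω)) := by
        funext ω
        refine Prod.ext_iff.mpr ⟨funext fun q => ?_, rfl⟩
        by_cases hq : i < q.1
        · simp [hφdef, hq, Fin.succ_lt_succ_iff, hΘ']
        · simp [hφdef, hq]
      rw [hco]
      exact h0.comp measurable_id hφ
    obtain ⟨ihInt, ihMom⟩ := ih Θ' X (fun i a b => hmeas i.succ a b) hXmeas hpair'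
      (fun i a b => hL2 i.succ a b) (fun i a b => hmean i.succ a b)
      (fun i a b => hvar i.succ a b) hsep' hXint
    set Y : Ω → Fin d → ℝ := fun ω => neuralVec d n Θ' X ω with hY
    have hYmeas : ∀ a, Measurable fun ω => Y ω a := by
      intro a
      exact measurable_mulVecProd n Θ' X (fun i a b => hmeas i.succ a b) hXmeas a
    -- the independence needed for the layer lemma
    have hTY : ∀ j a k b : Fin d, IndepFun (fun ω => Θ 0 ω j a * Θ 0 ω k b)
        (fun ω => Y ω a * Y ω b) μ := by
      intro j a k b
      have h0 := hsep 0
      have hleft : Measurable fun v : Fin d × Fin d → ℝ => v (j, a) * v (k, b) :=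
        (measurable_pi_apply _).mul (measurable_pi_apply _)
      set G : ((Fin (n+1) × Fin d × Fin d → ℝ) × (Fin d → ℝ)) → Fin d → ℝ :=
        fun z => ((List.ofFn fun i : Fin n =>
          (Matrix.of fun a b => z.1 (i.succ, a, b) : Matrix (Fin d) (Fin d) ℝ)).prod).mulVec
          z.2 with hG
      have hGmeas : ∀ a, Measurable fun z => G z a := by
        intro a
        exact measurable_mulVecProd
          (α := (Fin (n+1) × Fin d × Fin d → ℝ) × (Fin d → ℝ)) n
          (fun i z => Matrix.of fun a b => z.1 (i.succ, a, b)) (fun a z => z.2 a)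
          (fun i a b => show Measurable fun z :
              ((Fin (n+1) × Fin d × Fin d → ℝ) × (Fin d → ℝ)) => z.1 (i.succ, a, b) from
            (measurable_pi_apply _).comp measurable_fst)
          (fun a => show Measurable fun z :
              ((Fin (n+1) × Fin d × Fin d → ℝ) × (Fin d → ℝ)) => z.2 a from
            (measurable_pi_apply _).comp measurable_snd) a
      have hright : Measurable fun z : ((Fin (n+1) × Fin d × Fin d → ℝ) × (Fin d → ℝ)) =>
          G z a * G z b := (hGmeas a).mul (hGmeas b)
      have hco : (fun ω => Y ω a * Y ω b)
          = (fun z => G z a * G z b) ∘ (fun ω => ((fun q : Fin (n+1) × Fin d × Fin d =>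
              if (0 : Fin (n+1)) < q.1 then Θ q.1 ω q.2.1 q.2.2 else 0), fun j => X j ω)) := by
        funext ω
        have hlist : (List.ofFn fun i : Fin n => Θ' i ω)
            = List.ofFn fun i : Fin n => (Matrix.of fun a b =>
                if (0 : Fin (n+1)) < i.succ then Θ i.succ ω a b else 0 :
                  Matrix (Fin d) (Fin d) ℝ) := by
          refine congrArg List.ofFn (funext fun i => ?_)
          refine Matrix.ext fun a' b' => ?_
          show Θ i.succ ω a' b' = if (0 : Fin (n+1)) < i.succ then Θ i.succ ω a' b' else 0
          rw [if_pos (Fin.succ_pos i)]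
        have hYG : Y ω = G ((fun q : Fin (n+1) × Fin d × Fin d =>
            if (0 : Fin (n+1)) < q.1 then Θ q.1 ω q.2.1 q.2.2 else 0), fun j => X j ω) := by
          show ((List.ofFn fun i : Fin n => Θ' i ω).prod).mulVec (fun j => X j ω)
              = ((List.ofFn fun i : Fin n => (Matrix.of fun a b =>
                  if (0 : Fin (n+1)) < i.succ then Θ i.succ ω a b else 0 :
                    Matrix (Fin d) (Fin d) ℝ)).prod).mulVec (fun j => X j ω)
          rw [hlist]
        show Y ω a * Y ω b = (fun z => G z a * G z b) ((fun q : Fin (n+1) × Fin d × Fin d =>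
            if (0 : Fin (n+1)) < q.1 then Θ q.1 ω q.2.1 q.2.2 else 0), fun j => X j ω)
        rw [hYG]
      rw [hco]
      exact h0.comp hleft hright
    have hlayer := layer_moment μ (Θ 0) Y (hL2 0) ihInt
      (fun p q hpq => hpair (0, p) (0, q) (by
        intro hc; apply hpq; exact congrArg Prod.snd hc))
      hTY (hmean 0) (hvar 0)
    obtain ⟨lint, lmom⟩ := hlayer
    have hrw : ∀ ω, neuralVec d (n+1) Θ X ω = (Θ 0 ω).mulVec (Y ω) := by
      intro ω; rw [neuralVec_succ]
    have hsum : (∑ a, ∫ ω, Y ω a * Y ω a ∂μ) = ∑ a, ∫ ω, X a ω * X a ω ∂μ := by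
      by_cases hn : n = 0
      · subst hn
        refine Finset.sum_congr rfl fun a _ => ?_
        rw [ihMom a a, if_pos rfl]
      · have : ∀ a : Fin d, ∫ ω, Y ω a * Y ω a ∂μ
            = (d:ℝ)⁻¹ * ∑ c, ∫ ω, X c ω * X c ω ∂μ := by
          intro a
          rw [ihMom a a, if_neg hn, if_pos rfl]
        rw [Finset.sum_congr rfl fun a _ => this a, Finset.sum_const, Finset.card_univ,
          Fintype.card_fin, nsmul_eq_mul, ← mul_assoc,
          mul_inv_cancel₀ (by exact_mod_cast hd.ne' : (d:ℝ) ≠ 0), one_mul]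
    constructor
    · intro j k
      have : (fun ω => neuralVec d (n+1) Θ X ω j * neuralVec d (n+1) Θ X ω k)
          = fun ω => (Θ 0 ω).mulVec (Y ω) j * (Θ 0 ω).mulVec (Y ω) k := by
        funext ω
        show neuralVec d (n+1) Θ X ω j * neuralVec d (n+1) Θ X ω k
            = (Θ 0 ω).mulVec (Y ω) j * (Θ 0 ω).mulVec (Y ω) k
        rw [hrw ω]
      rw [this]
      exact lint j k
    · intro j k
      have h1 : ∫ ω, neuralVec d (n+1) Θ X ω j * neuralVec d (n+1) Θ X ω k ∂μ
          = ∫ ω, (Θ 0 ω).mulVec (Y ω) j * (Θ 0 ω).mulVec (Y ω) k ∂μ := by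
        refine integral_congr_ae (Filter.Eventually.of_forall fun ω => ?_)
        show neuralVec d (n+1) Θ X ω j * neuralVec d (n+1) Θ X ω k
            = (Θ 0 ω).mulVec (Y ω) j * (Θ 0 ω).mulVec (Y ω) k
        rw [hrw ω]
      rw [h1, lmom j k, if_neg (Nat.succ_ne_zero n), hsum]

theorem neural_inner_sq_le (μ : Measure Ω) [IsProbabilityMeasure μ]
    (d n : ℕ) (hd : 0 < d) (hn : 1 ≤ n)
    (Θ : Fin n → Ω → Matrix (Fin d) (Fin d) ℝ) (X : Fin d → Ω → ℝ)
    (hΘmeas : ∀ i a b, Measurable fun ω => Θ i ω a b)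
    (hXmeas : ∀ j, Measurable (X j))
    (hentries : iIndepFun
      (fun p : Fin n × Fin d × Fin d => fun ω => Θ p.1 ω p.2.1 p.2.2) μ)
    (hgauss : ∀ i a b, Measure.map (fun ω => Θ i ω a b) μ = gaussianReal 0 (d : ℝ≥0)⁻¹)
    (hindepX : IndepFun (fun ω => fun p : Fin n × Fin d × Fin d => Θ p.1 ω p.2.1 p.2.2)
      (fun ω (j : Fin d) => X j ω) μ)
    (hint : ∀ j, Integrable (fun ω => (X j ω) ^ 2) μ)
    (Xstar' : Ω → Fin d → ℝ)
    (hXstar'meas : Measurable Xstar')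
    (hcopy_indep : IndepFun (fun ω => neuralVec d n Θ X ω) Xstar' μ)
    (hcopy_id : Measure.map Xstar' μ = Measure.map (fun ω => neuralVec d n Θ X ω) μ) :
    ∫ ω, (∑ j, neuralVec d n Θ X ω j * Xstar' ω j) ^ 2 ∂μ
      ≤ (d : ℝ) *
          (Finset.univ.sup' (Finset.univ_nonempty_iff.mpr (Fin.pos_iff_nonempty.mp hd))
            (fun j => ∫ ω, (X j ω) ^ 2 ∂μ)) ^ 2 := by
  have hv : ((d : ℝ≥0)⁻¹ : ℝ≥0) ≠ 0 := by
    simp only [ne_eq, inv_eq_zero, Nat.cast_eq_zero]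
    exact hd.ne'
  -- entry moments
  have hmean : ∀ (i : Fin n) (a b : Fin d), ∫ ω, Θ i ω a b ∂μ = 0 := by
    intro i a b
    have h1 : ∫ x, x ∂(Measure.map (fun ω => Θ i ω a b) μ) = ∫ ω, Θ i ω a b ∂μ :=
      integral_map (hΘmeas i a b).aemeasurable aestronglyMeasurable_id
    rw [← h1, hgauss i a b, gaussian_mean hv]
  have hvar : ∀ (i : Fin n) (a b : Fin d), ∫ ω, (Θ i ω a b) ^ 2 ∂μ = (d : ℝ)⁻¹ := by
    intro i a b
    have h1 : ∫ x, x ^ 2 ∂(Measure.map (fun ω => Θ i ω a b) μ)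
        = ∫ ω, (Θ i ω a b) ^ 2 ∂μ :=
      integral_map (hΘmeas i a b).aemeasurable
        (measurable_id.pow_const 2).aestronglyMeasurable
    rw [← h1, hgauss i a b, gaussian_sq hv]
    push_cast
    rfl
  have hL2 : ∀ (i : Fin n) (a b : Fin d), MemLp (fun ω => Θ i ω a b) 2 μ := by
    intro i a b
    refine (memLp_two_iff_integrable_sq (hΘmeas i a b).aestronglyMeasurable).mpr ?_
    have h1 : Integrable (fun x : ℝ => x ^ 2) (Measure.map (fun ω => Θ i ω a b) μ) := by
      rw [hgauss i a b]; exact gaussian_integrable_sq hv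
    exact (integrable_map_measure (measurable_id.pow_const 2).aestronglyMeasurable
      (hΘmeas i a b).aemeasurable).mp h1
  -- pairwise independence of entries
  have hpair : ∀ p q : Fin n × Fin d × Fin d, p ≠ q →
      IndepFun (fun ω => Θ p.1 ω p.2.1 p.2.2) (fun ω => Θ q.1 ω q.2.1 q.2.2) μ :=
    fun p q hpq => hentries.indepFun hpq
  -- separation independence
  have hsep : ∀ i : Fin n, IndepFun (fun ω (q : Fin d × Fin d) => Θ i ω q.1 q.2)
      (fun ω => ((fun q : Fin n × Fin d × Fin d =>
          if i < q.1 then Θ q.1 ω q.2.1 q.2.2 else 0), fun j => X j ω)) μ := by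
    intro i
    classical
    set S : Finset (Fin n × Fin d × Fin d) := Finset.univ.filter (fun p => p.1 = i) with hS
    set T : Finset (Fin n × Fin d × Fin d) := Finset.univ.filter (fun p => i < p.1) with hT
    have hST : Disjoint S T := by
      rw [Finset.disjoint_left]
      intro p hpS hpT
      rw [hS, Finset.mem_filter] at hpS
      rw [hT, Finset.mem_filter] at hpT
      exact absurd (hpS.2 ▸ hpT.2) (lt_irrefl i)
    have hmeas' : ∀ p : Fin n × Fin d × Fin d,
        Measurable fun ω => Θ p.1 ω p.2.1 p.2.2 := fun p => hΘmeas p.1 p.2.1 p.2.2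
    have hfin := hentries.indepFun_finset S T hST hmeas'
    -- the three functions
    set f : Ω → (Fin d × Fin d) → ℝ := fun ω q => Θ i ω q.1 q.2 with hfdef
    set g : Ω → (Fin n × Fin d × Fin d) → ℝ :=
      fun ω q => if i < q.1 then Θ q.1 ω q.2.1 q.2.2 else 0 with hgdef
    set h : Ω → Fin d → ℝ := fun ω j => X j ω with hhdef
    have hfmeas : Measurable f :=
      measurable_pi_lambda _ fun q => hΘmeas i q.1 q.2
    have hgmeas : Measurable g := by
      refine measurable_pi_lambda _ fun q => ?_
      by_cases hq : i < q.1
      · simp only [hgdef, hq, if_true]; exact hΘmeas q.1 q.2.1 q.2.2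
      · simp only [hgdef, hq, if_false]; exact measurable_const
    have hhmeas : Measurable h := measurable_pi_lambda _ fun j => hXmeas j
    -- f ⟂ g  from  hfin
    have hfg : IndepFun f g μ := by
      have hG1 : Measurable fun (v : S → ℝ) (q : Fin d × Fin d) =>
          v ⟨(i, q), by rw [hS, Finset.mem_filter]; exact ⟨Finset.mem_univ _, rfl⟩⟩ :=
        measurable_pi_lambda _ fun q => measurable_pi_apply _
      have hG2 : Measurable fun (w : T → ℝ) (q : Fin n × Fin d × Fin d) =>
          if hq : i < q.1 then w ⟨q, by rw [hT, Finset.mem_filter]; exact ⟨Finset.mem_univ _, hq⟩⟩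
          else 0 := by
        refine measurable_pi_lambda _ fun q => ?_
        by_cases hq : i < q.1
        · simp only [hq, dif_pos]; exact measurable_pi_apply _
        · simp only [hq, dif_neg, not_false_iff]; exact measurable_const
      have := hfin.comp hG1 hG2
      refine this.congr ?_ ?_ <;> refine Filter.Eventually.of_forall fun ω => ?_
      · rfl
      · funext q
        by_cases hq : i < q.1
        · simp only [Function.comp_apply, hgdef, hq, dif_pos, if_true]
        · simp only [Function.comp_apply, hgdef, hq, dif_neg, not_false_iff, if_false]
    -- g ⟂ h and (f,g) ⟂ h from hindepX
    have hF1 : Measurable fun (e : (Fin n × Fin d × Fin d) → ℝ) (q : Fin d × Fin d) =>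
        e (i, q) := measurable_pi_lambda _ fun q => measurable_pi_apply _
    have hF2 : Measurable fun (e : (Fin n × Fin d × Fin d) → ℝ)
        (q : Fin n × Fin d × Fin d) => if i < q.1 then e q else 0 := by
      refine measurable_pi_lambda _ fun q => ?_
      by_cases hq : i < q.1
      · simp only [hq, if_true]; exact measurable_pi_apply _
      · simp only [hq, if_false]; exact measurable_const
    have hgh : IndepFun g h μ := by
      have := hindepX.comp hF2 measurable_id
      refine this.congr ?_ ?_ <;> refine Filter.Eventually.of_forall fun ω => ?_
      · rfl
      · rfl
    have hfgh : IndepFun (fun ω => (f ω, g ω)) h μ := by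
      have := hindepX.comp (hF1.prodMk hF2) measurable_id
      refine this.congr ?_ ?_ <;> refine Filter.Eventually.of_forall fun ω => ?_
      · rfl
      · rfl
    exact indepFun_pair_right hfmeas hgmeas hhmeas hfg hgh hfgh
  -- integrability of X products
  have hXL2 : ∀ j, MemLp (X j) 2 μ := fun j =>
    (memLp_two_iff_integrable_sq (hXmeas j).aestronglyMeasurable).mpr (hint j)
  have hXint2 : ∀ a b, Integrable (fun ω => X a ω * X b ω) μ :=
    fun a b => int_mul_of_L2 (hXL2 a) (hXL2 b)
  obtain ⟨hVint, hVmom⟩ := neural_moments μ hd n Θ X hΘmeas hXmeas hpair hL2 hmean hvar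
    hsep hXint2
  set Srep : ℝ := ∑ a, ∫ ω, X a ω * X a ω ∂μ with hSrep
  set c : ℝ := (d : ℝ)⁻¹ * Srep with hc
  have hnne : n ≠ 0 := Nat.one_le_iff_ne_zero.mp hn
  have hVmom' : ∀ j k, ∫ ω, neuralVec d n Θ X ω j * neuralVec d n Θ X ω k ∂μ
      = if j = k then c else 0 := by
    intro j k
    rw [hVmom j k, if_neg hnne]
  -- measurability of the neural vector
  have hVcompmeas : ∀ j, Measurable fun ω => neuralVec d n Θ X ω j := fun j =>
    measurable_mulVecProd n Θ X hΘmeas hXmeas j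
  have hVmeas : Measurable fun ω => neuralVec d n Θ X ω :=
    measurable_pi_lambda _ hVcompmeas
  -- transfer to the copy
  have hWint : ∀ j k, Integrable (fun ω => Xstar' ω j * Xstar' ω k) μ := by
    intro j k
    have hm : Measurable fun v : Fin d → ℝ => v j * v k :=
      (measurable_pi_apply j).mul (measurable_pi_apply k)
    have h1 : Integrable (fun v : Fin d → ℝ => v j * v k)
        (Measure.map (fun ω => neuralVec d n Θ X ω) μ) :=
      (integrable_map_measure hm.aestronglyMeasurable hVmeas.aemeasurable).mpr (hVint j k)
    rw [← hcopy_id] at h1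
    exact (integrable_map_measure hm.aestronglyMeasurable hXstar'meas.aemeasurable).mp h1
  have hWmom : ∀ j k, ∫ ω, Xstar' ω j * Xstar' ω k ∂μ = if j = k then c else 0 := by
    intro j k
    have hm : Measurable fun v : Fin d → ℝ => v j * v k :=
      (measurable_pi_apply j).mul (measurable_pi_apply k)
    have h1 : ∫ v, v j * v k ∂(Measure.map Xstar' μ)
        = ∫ ω, Xstar' ω j * Xstar' ω k ∂μ := by
      rw [integral_map hXstar'meas.aemeasurable]
      exact hm.aestronglyMeasurable
    have h2 : ∫ v, v j * v k ∂(Measure.map (fun ω => neuralVec d n Θ X ω) μ)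
        = ∫ ω, neuralVec d n Θ X ω j * neuralVec d n Θ X ω k ∂μ := by
      rw [integral_map hVmeas.aemeasurable]
      exact hm.aestronglyMeasurable
    rw [← h1, hcopy_id, h2, hVmom' j k]
  -- independence of products
  have hVW : ∀ j k, IndepFun (fun ω => neuralVec d n Θ X ω j * neuralVec d n Θ X ω k)
      (fun ω => Xstar' ω j * Xstar' ω k) μ := by
    intro j k
    have hm : Measurable fun v : Fin d → ℝ => v j * v k :=
      (measurable_pi_apply j).mul (measurable_pi_apply k)
    exact hcopy_indep.comp hm hm
  have htermint : ∀ j k, Integrable (fun ω =>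
      (neuralVec d n Θ X ω j * neuralVec d n Θ X ω k) * (Xstar' ω j * Xstar' ω k)) μ :=
    fun j k => (hVW j k).integrable_mul (hVint j k) (hWint j k)
  -- expand the square
  have hexp : ∀ ω, (∑ j, neuralVec d n Θ X ω j * Xstar' ω j) ^ 2
      = ∑ j, ∑ k, (neuralVec d n Θ X ω j * neuralVec d n Θ X ω k)
          * (Xstar' ω j * Xstar' ω k) := by
    intro ω
    rw [pow_two, Finset.sum_mul_sum]
    exact Finset.sum_congr rfl fun j _ => Finset.sum_congr rfl fun k _ => by ring
  have hcnonneg : 0 ≤ c := by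
    rw [hc, hSrep]
    refine mul_nonneg (by positivity) (Finset.sum_nonneg fun a _ => ?_)
    refine integral_nonneg fun ω => ?_
    exact mul_self_nonneg _
  set M : ℝ := Finset.univ.sup' (Finset.univ_nonempty_iff.mpr (Fin.pos_iff_nonempty.mp hd))
      (fun j => ∫ ω, (X j ω) ^ 2 ∂μ) with hM
  have hsqeq : ∀ a : Fin d, ∫ ω, X a ω * X a ω ∂μ = ∫ ω, (X a ω) ^ 2 ∂μ :=
    fun a => integral_congr_ae (Filter.Eventually.of_forall fun ω => (pow_two _).symm)
  have hcM : c ≤ M := by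
    rw [hc, hSrep]
    have hS_le : (∑ a, ∫ ω, X a ω * X a ω ∂μ) ≤ (d : ℝ) * M := by
      calc (∑ a, ∫ ω, X a ω * X a ω ∂μ) ≤ ∑ _a : Fin d, M := by
            refine Finset.sum_le_sum fun a _ => ?_
            rw [hsqeq a, hM]
            exact Finset.le_sup' (fun j => ∫ ω, (X j ω) ^ 2 ∂μ) (Finset.mem_univ a)
        _ = (d : ℝ) * M := by
            rw [Finset.sum_const, Finset.card_univ, Fintype.card_fin, nsmul_eq_mul]
    calc (d : ℝ)⁻¹ * (∑ a, ∫ ω, X a ω * X a ω ∂μ) ≤ (d : ℝ)⁻¹ * ((d : ℝ) * M) := by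
          refine mul_le_mul_of_nonneg_left hS_le (by positivity)
      _ = M := by
          rw [← mul_assoc, inv_mul_cancel₀ (by exact_mod_cast hd.ne' : (d:ℝ) ≠ 0), one_mul]
  -- compute the integral
  have hI : ∫ ω, (∑ j, neuralVec d n Θ X ω j * Xstar' ω j) ^ 2 ∂μ = (d : ℝ) * c ^ 2 := by
    calc ∫ ω, (∑ j, neuralVec d n Θ X ω j * Xstar' ω j) ^ 2 ∂μ
        = ∫ ω, ∑ j, ∑ k, (neuralVec d n Θ X ω j * neuralVec d n Θ X ω k)
            * (Xstar' ω j * Xstar' ω k) ∂μ :=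
          integral_congr_ae (Filter.Eventually.of_forall fun ω => hexp ω)
      _ = ∑ j, ∑ k, ∫ ω, (neuralVec d n Θ X ω j * neuralVec d n Θ X ω k)
            * (Xstar' ω j * Xstar' ω k) ∂μ := by
          rw [integral_finset_sum _ fun j _ =>
            integrable_finset_sum _ fun k _ => htermint j k]
          exact Finset.sum_congr rfl fun j _ =>
            integral_finset_sum _ fun k _ => htermint j k
      _ = ∑ j, ∑ k, (if j = k then c else 0) * (if j = k then c else 0) := by
          refine Finset.sum_congr rfl fun j _ => Finset.sum_congr rfl fun k _ => ?_
          have h3 : ∫ ω, (neuralVec d n Θ X ω j * neuralVec d n Θ X ω k)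
              * (Xstar' ω j * Xstar' ω k) ∂μ
              = (∫ ω, neuralVec d n Θ X ω j * neuralVec d n Θ X ω k ∂μ)
                * ∫ ω, Xstar' ω j * Xstar' ω k ∂μ :=
            (hVW j k).integral_mul_eq_mul_integral (hVint j k).aestronglyMeasurable (hWint j k).aestronglyMeasurable
          rw [h3, hVmom' j k, hWmom j k]
      _ = (d : ℝ) * c ^ 2 := by
          have h4 : ∀ j : Fin d, ∑ k, (if j = k then c else 0) * (if j = k then c else 0)
              = c ^ 2 := by
            intro j
            rw [Finset.sum_eq_single j]
            · rw [if_pos rfl, pow_two]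
            · intro k _ hk; rw [if_neg fun hh => hk hh.symm, zero_mul]
            · intro hj; exact absurd (Finset.mem_univ j) hj
          rw [Finset.sum_congr rfl fun j _ => h4 j, Finset.sum_const, Finset.card_univ,
            Fintype.card_fin, nsmul_eq_mul]
  rw [hI]
  have hM0 : 0 ≤ M := le_trans hcnonneg hcM
  refine mul_le_mul_of_nonneg_left ?_ (by positivity)
  exact pow_le_pow_left₀ hcnonneg hcM 2

end
end

section
/- In the neural setup with n ≥ 1, assume that the coordinates X₁, …, X_d are mutually independent with E[X_j⁴] < ∞ for every j. For k ∈ {1,2,3,4}, let j^k = (j^k_0, …, j^k_n) be sequences with entries in {1, …, d} such that for every ℓ ∈ {0, 1, …, n}: j^1_ℓ = j^2_ℓ, j^3_ℓ = j^4_ℓ, and j^1_ℓ ≠ j^3_ℓ. Set P = (∏_{i=1}^n Θ^{(i)}_{j^1_{i−1} j^1_i}) X_{j^1_n} · (∏_{i=1}^n Θ^{(i)}_{j^2_{i−1} j^2_i}) X_{j^2_n} and Q = (∏_{i=1}^n Θ^{(i)}_{j^3_{i−1} j^3_i}) X_{j^3_n} · (∏_{i=1}^n Θ^{(i)}_{j^4_{i−1}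 j^4_i}) X_{j^4_n}. Then Cov(P, Q) = 0. -/
/-!
STATEMENT 17: In the neural setup with `n ≥ 1`, assume the coordinates `X₁, …, X_d` are
mutually independent with `E[X_j⁴] < ∞` for every `j`. For sequences
`j^k = (j^k_0, …, j^k_n)` with entries in `{1, …, d}` (`k ∈ {1,2,3,4}`) such that for every
`ℓ ∈ {0, …, n}`: `j^1_ℓ = j^2_ℓ`, `j^3_ℓ = j^4_ℓ` and `j^1_ℓ ≠ j^3_ℓ`, set
`P = (∏_i Θ^{(i)}_{j^1_{i−1} j^1_i}) X_{j^1_n} · (∏_i Θ^{(i)}_{j^2_{i−1} j^2_i}) X_{j^2_n}`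
and `Q = (∏_i Θ^{(i)}_{j^3_{i−1} j^3_i}) X_{j^3_n} · (∏_i Θ^{(i)}_{j^4_{i−1} j^4_i}) X_{j^4_n}`.
Then `Cov(P, Q) = 0`.
-/

open MeasureTheory ProbabilityTheory
open scoped NNReal

set_option maxHeartbeats 1000000

noncomputable section

variable {Ω : Type*} [MeasurableSpace Ω]

/-- The product `(∏_{i=1}^n Θ^{(i)}_{a_{i−1} a_i}) X_{a_n} · (∏_{i=1}^n Θ^{(i)}_{b_{i−1} b_i}) X_{b_n}`
along two paths `a` and `b`. -/
def pathProd (d n : ℕ) (Θ : Fin n → Ω → Matrix (Fin d) (Fin d) ℝ)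
    (X : Fin d → Ω → ℝ) (a b : Fin (n + 1) → Fin d) (ω : Ω) : ℝ :=
  ((∏ i : Fin n, Θ i ω (a i.castSucc) (a i.succ)) * X (a (Fin.last n)) ω) *
    ((∏ i : Fin n, Θ i ω (b i.castSucc) (b i.succ)) * X (b (Fin.last n)) ω)

theorem cov_pathProd_eq_zero_of_disjoint_paths (μ : Measure Ω) [IsProbabilityMeasure μ]
    (d n : ℕ) (hd : 0 < d) (hn : 1 ≤ n)
    (Θ : Fin n → Ω → Matrix (Fin d) (Fin d) ℝ) (X : Fin d → Ω → ℝ)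
    (hΘmeas : ∀ i a b, Measurable fun ω => Θ i ω a b)
    (hXmeas : ∀ j, Measurable (X j))
    (hentries : iIndepFun
      (fun p : Fin n × Fin d × Fin d => fun ω => Θ p.1 ω p.2.1 p.2.2) μ)
    (hgauss : ∀ i a b, Measure.map (fun ω => Θ i ω a b) μ = gaussianReal 0 (d : ℝ≥0)⁻¹)
    (hindepX : IndepFun (fun ω => fun p : Fin n × Fin d × Fin d => Θ p.1 ω p.2.1 p.2.2)
      (fun ω (j : Fin d) => X j ω) μ)
    (hXindep : iIndepFun X μ)
    (hX4 : ∀ j, Integrable (fun ω => (X j ω) ^ 4) μ)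
    (j : Fin 4 → Fin (n + 1) → Fin d)
    (hpaths : ∀ ℓ : Fin (n + 1), j 0 ℓ = j 1 ℓ ∧ j 2 ℓ = j 3 ℓ ∧ j 0 ℓ ≠ j 2 ℓ) :
    (∫ ω, pathProd d n Θ X (j 0) (j 1) ω * pathProd d n Θ X (j 2) (j 3) ω ∂μ)
        - (∫ ω, pathProd d n Θ X (j 0) (j 1) ω ∂μ)
          * (∫ ω, pathProd d n Θ X (j 2) (j 3) ω ∂μ) = 0 := by
  classical
  have hj1 : j 1 = j 0 := funext fun ℓ => ((hpaths ℓ).1).symm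
  have hj3 : j 3 = j 2 := funext fun ℓ => ((hpaths ℓ).2.1).symm
  set ι := Fin n × Fin d × Fin d
  set ΘT : Ω → (ι → ℝ) := fun ω => fun p : ι => Θ p.1 ω p.2.1 p.2.2 with hΘT
  set XT : Ω → (Fin d → ℝ) := fun ω (k : Fin d) => X k ω with hXT
  have hΘTmeas : Measurable ΘT := measurable_pi_lambda _ fun p => hΘmeas p.1 p.2.1 p.2.2
  have hXTmeas : Measurable XT := measurable_pi_lambda _ fun k => hXmeas k
  -- path entry maps
  set ea : Fin n → ι := fun i => (i, j 0 i.castSucc, j 0 i.succ) with hea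
  set ec : Fin n → ι := fun i => (i, j 2 i.castSucc, j 2 i.succ) with hec
  -- real-valued functionals on tuples
  set fa : (ι → ℝ) → ℝ := fun v => (∏ i : Fin n, v (ea i)) ^ 2 with hfa
  set fc : (ι → ℝ) → ℝ := fun v => (∏ i : Fin n, v (ec i)) ^ 2 with hfc
  set ga : (Fin d → ℝ) → ℝ := fun w => (w (j 0 (Fin.last n))) ^ 2 with hga
  set gc : (Fin d → ℝ) → ℝ := fun w => (w (j 2 (Fin.last n))) ^ 2 with hgc
  have hproda : Measurable fun v : ι → ℝ => ∏ i : Fin n, v (ea i) :=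
    Finset.measurable_prod Finset.univ fun i _ => measurable_pi_apply (ea i)
  have hprodc : Measurable fun v : ι → ℝ => ∏ i : Fin n, v (ec i) :=
    Finset.measurable_prod Finset.univ fun i _ => measurable_pi_apply (ec i)
  have hfam : Measurable fa := hproda.pow_const 2
  have hfcm : Measurable fc := hprodc.pow_const 2
  have hgam : Measurable ga := (measurable_pi_apply (j 0 (Fin.last n))).pow_const 2
  have hgcm : Measurable gc := (measurable_pi_apply (j 2 (Fin.last n))).pow_const 2
  -- rewrite pathProds
  have hP : pathProd d n Θ X (j 0) (j 1) = fun ω => fa (ΘT ω) * ga (XT ω) := by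
    funext ω; simp only [pathProd, hj1, hfa, hga, hΘT, hXT]; ring
  have hQ : pathProd d n Θ X (j 2) (j 3) = fun ω => fc (ΘT ω) * gc (XT ω) := by
    funext ω; simp only [pathProd, hj3, hfc, hgc, hΘT, hXT]; ring
  -- finsets of entries used
  set Sa : Finset ι := Finset.image ea Finset.univ with hSa
  set Sc : Finset ι := Finset.image ec Finset.univ with hSc
  have hdisj : Disjoint Sa Sc := by
    rw [Finset.disjoint_left]
    rintro p hp hp'
    simp only [hSa, hSc, Finset.mem_image, Finset.mem_univ, true_and] at hp hp'
    obtain ⟨i, rfl⟩ := hp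
    obtain ⟨i', hi'⟩ := hp'
    have h1 : i' = i := congrArg Prod.fst hi'
    have h2 : j 2 i'.castSucc = j 0 i.castSucc := congrArg (fun q => q.2.1) hi'
    rw [h1] at h2
    exact (hpaths i.castSucc).2.2 h2.symm
  -- independence of the two Θ-side functionals
  have hmemA : ∀ i : Fin n, ea i ∈ Sa := fun i => Finset.mem_image_of_mem _ (Finset.mem_univ i)
  have hmemC : ∀ i : Fin n, ec i ∈ Sc := fun i => Finset.mem_image_of_mem _ (Finset.mem_univ i)
  set φa : ((p : Sa) → ℝ) → ℝ := fun v => (∏ i : Fin n, v ⟨ea i, hmemA i⟩) ^ 2 with hφa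
  set φc : ((p : Sc) → ℝ) → ℝ := fun v => (∏ i : Fin n, v ⟨ec i, hmemC i⟩) ^ 2 with hφc
  have hφproda : Measurable fun v : (p : Sa) → ℝ => ∏ i : Fin n, v ⟨ea i, hmemA i⟩ :=
    Finset.measurable_prod Finset.univ fun i _ => measurable_pi_apply (⟨ea i, hmemA i⟩ : Sa)
  have hφprodc : Measurable fun v : (p : Sc) → ℝ => ∏ i : Fin n, v ⟨ec i, hmemC i⟩ :=
    Finset.measurable_prod Finset.univ fun i _ => measurable_pi_apply (⟨ec i, hmemC i⟩ : Sc)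
  have hφam : Measurable φa := hφproda.pow_const 2
  have hφcm : Measurable φc := hφprodc.pow_const 2
  have hindepΘ : IndepFun (fun ω => fa (ΘT ω)) (fun ω => fc (ΘT ω)) μ := by
    have h := (hentries.indepFun_finset Sa Sc hdisj
      (fun p => hΘmeas p.1 p.2.1 p.2.2)).comp hφam hφcm
    exact h
  -- independence of the two X-side functionals
  have hindepXX : IndepFun (fun ω => ga (XT ω)) (fun ω => gc (XT ω)) μ := by
    have hne : j 0 (Fin.last n) ≠ j 2 (Fin.last n) := (hpaths (Fin.last n)).2.2
    have h := (hXindep.indepFun hne).comp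
      (measurable_id.pow_const 2) (measurable_id.pow_const 2)
    exact h
  -- independence of Θ-side and X-side
  have hPQ : IndepFun (fun ω => fa (ΘT ω) * fc (ΘT ω)) (fun ω => ga (XT ω) * gc (XT ω)) μ :=
    hindepX.comp (hfam.mul hfcm) (hgam.mul hgcm)
  have hPind : IndepFun (fun ω => fa (ΘT ω)) (fun ω => ga (XT ω)) μ :=
    hindepX.comp hfam hgam
  have hQind : IndepFun (fun ω => fc (ΘT ω)) (fun ω => gc (XT ω)) μ :=
    hindepX.comp hfcm hgcm
  -- ae strong measurability
  have aΘa : AEStronglyMeasurable (fun ω => fa (ΘT ω)) μ :=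
    (hfam.comp hΘTmeas).aestronglyMeasurable
  have aΘc : AEStronglyMeasurable (fun ω => fc (ΘT ω)) μ :=
    (hfcm.comp hΘTmeas).aestronglyMeasurable
  have aXa : AEStronglyMeasurable (fun ω => ga (XT ω)) μ :=
    (hgam.comp hXTmeas).aestronglyMeasurable
  have aXc : AEStronglyMeasurable (fun ω => gc (XT ω)) μ :=
    (hgcm.comp hXTmeas).aestronglyMeasurable
  -- compute the integrals
  rw [hP, hQ]
  have h1 : (∫ ω, (fa (ΘT ω) * ga (XT ω)) * (fc (ΘT ω) * gc (XT ω)) ∂μ)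
      = (∫ ω, fa (ΘT ω) * fc (ΘT ω) ∂μ) * (∫ ω, ga (XT ω) * gc (XT ω) ∂μ) := by
    have := hPQ.integral_fun_mul_eq_mul_integral ((hfam.mul hfcm).comp hΘTmeas).aestronglyMeasurable
      ((hgam.mul hgcm).comp hXTmeas).aestronglyMeasurable
    calc (∫ ω, (fa (ΘT ω) * ga (XT ω)) * (fc (ΘT ω) * gc (XT ω)) ∂μ)
        = ∫ ω, (fa (ΘT ω) * fc (ΘT ω)) * (ga (XT ω) * gc (XT ω)) ∂μ := by
          congr 1; funext ω; ring
      _ = _ := this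
  have h2 : (∫ ω, fa (ΘT ω) * fc (ΘT ω) ∂μ)
      = (∫ ω, fa (ΘT ω) ∂μ) * (∫ ω, fc (ΘT ω) ∂μ) := hindepΘ.integral_fun_mul_eq_mul_integral aΘa aΘc
  have h3 : (∫ ω, ga (XT ω) * gc (XT ω) ∂μ)
      = (∫ ω, ga (XT ω) ∂μ) * (∫ ω, gc (XT ω) ∂μ) := hindepXX.integral_fun_mul_eq_mul_integral aXa aXc
  have h4 : (∫ ω, fa (ΘT ω) * ga (XT ω) ∂μ)
      = (∫ ω, fa (ΘT ω) ∂μ) * (∫ ω, ga (XT ω) ∂μ) := hPind.integral_fun_mul_eq_mul_integral aΘa aXa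
  have h5 : (∫ ω, fc (ΘT ω) * gc (XT ω) ∂μ)
      = (∫ ω, fc (ΘT ω) ∂μ) * (∫ ω, gc (XT ω) ∂μ) := hQind.integral_fun_mul_eq_mul_integral aΘc aXc
  rw [h1, h2, h3, h4, h5]; ring

end
end
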